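/- Let X be a zero-dimensional set of reals. Then X satisfies Ufin(O,Ω) if, and only if, for every continuous function Ψ : X → ℕ^ℕ, either there is a principal filter G on ℕ for which the reduced product image Ψ[X]/G (the set of ∼_G-equivalence classes of elements of Ψ[X]) is finite, or else there is a non-principal filter F on ℕ such that the set {[f]_F : f ∈ Ψ[X]} is bounded in the reduced product ℕ^ℕ/F, i.e., there exists g ∈ ℕ^ℕ such that for every f ∈ Ψ[X] the set {n : f(n) < g(n)} belongs to F. -/

import Mathlib

open Filter

/-- `f ≤* g`: `f n ≤ g n` for all but finitely many `n`. -/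
def EvLE (f g : ℕ → ℕ) : Prop := ∀ᶠ n in atTop, f n ≤ g n

/-- A subset of the Baire space is dominating if every function is
eventually dominated by a member of it. -/
def Dominating (Y : Set (ℕ → ℕ)) : Prop := ∀ g : ℕ → ℕ, ∃ f ∈ Y, EvLE g f

/-- A subset of the Baire space is bounded (w.r.t. `≤*`) if some single
function eventually dominates all its members. -/
def BoundedStar (Y : Set (ℕ → ℕ)) : Prop := ∃ g : ℕ → ℕ, ∀ f ∈ Y, EvLE f g

/-- `maxfin Y`: pointwise maxima of nonempty finite subsets of `Y`. -/
def maxfin (Y : Set (ℕ → ℕ)) : Set (ℕ → ℕ) :=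
  {g | ∃ F : Finset (ℕ → ℕ), F.Nonempty ∧ ↑F ⊆ Y ∧ g = fun n => F.sup (fun f => f n)}

/-- `Y` is `k`-dominating: for each `f` there are `g_1, …, g_k ∈ Y` whose
pointwise maximum eventually dominates `f`. -/
def KDominating (Y : Set (ℕ → ℕ)) (k : ℕ) : Prop :=
  ∀ f : ℕ → ℕ, ∃ g : Fin k → (ℕ → ℕ), (∀ i, g i ∈ Y) ∧
    ∀ᶠ n in atTop, f n ≤ Finset.univ.sup (fun i => g i n)

/-- An open cover of a topological space. -/
def IsOpenCover {α : Type*} [TopologicalSpace α] (𝒰 : Set (Set α)) : Prop :=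
  (∀ u ∈ 𝒰, IsOpen u) ∧ ⋃₀ 𝒰 = Set.univ

/-- An ω-cover: a cover such that every finite subset of the space is
contained in some member. -/
def IsOmegaCover {α : Type*} (𝒱 : Set (Set α)) : Prop :=
  ⋃₀ 𝒱 = Set.univ ∧ ∀ F : Set α, F.Finite → ∃ V ∈ 𝒱, F ⊆ V

/-- A γ-cover: an infinite cover such that every point belongs to all but
finitely many members. -/
def IsGammaCover {α : Type*} (𝒱 : Set (Set α)) : Prop :=
  ⋃₀ 𝒱 = Set.univ ∧ 𝒱.Infinite ∧ ∀ x : α, {V ∈ 𝒱 | x ∉ V}.Finite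

/-- A set of reals is zero-dimensional: its subspace topology has a base of
clopen sets. -/
def ZeroDimensionalSet (X : Set ℝ) : Prop :=
  ∃ B : Set (Set ↥X), TopologicalSpace.IsTopologicalBasis B ∧ ∀ b ∈ B, IsClopen b

/-- The Menger property `Ufin(O,O)`. -/
def MengerProp (α : Type*) [TopologicalSpace α] : Prop :=
  ∀ 𝒰 : ℕ → Set (Set α), (∀ n, (𝒰 n).Countable ∧ IsOpenCover (𝒰 n)) →
    ∃ ℱ : ℕ → Set (Set α), (∀ n, (ℱ n).Finite ∧ ℱ n ⊆ 𝒰 n) ∧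
      (⋃ n, ⋃₀ ℱ n) = Set.univ

/-- The Hurewicz property `Ufin(O,Γ)`. -/
def HurewiczProp (α : Type*) [TopologicalSpace α] : Prop :=
  ∀ 𝒰 : ℕ → Set (Set α), (∀ n, (𝒰 n).Countable ∧ IsOpenCover (𝒰 n)) →
    ∃ ℱ : ℕ → Set (Set α), (∀ n, (ℱ n).Finite ∧ ℱ n ⊆ 𝒰 n) ∧
      ((∃ n, ⋃₀ ℱ n = Set.univ) ∨ IsGammaCover {s | ∃ n, s = ⋃₀ ℱ n})

/-- The property `Ufin(O,Ω)`. -/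
def UfinOOmega (α : Type*) [TopologicalSpace α] : Prop :=
  ∀ 𝒰 : ℕ → Set (Set α), (∀ n, (𝒰 n).Countable ∧ IsOpenCover (𝒰 n)) →
    ∃ ℱ : ℕ → Set (Set α), (∀ n, (ℱ n).Finite ∧ ℱ n ⊆ 𝒰 n) ∧
      ((∃ n, ⋃₀ ℱ n = Set.univ) ∨ IsOmegaCover {s | ∃ n, s = ⋃₀ ℱ n})

private theorem fwd {α : Type*} [TopologicalSpace α] (hU : UfinOOmega α)
    (Ψ : α → (ℕ → ℕ)) (hΨ : Continuous Ψ) :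
        (∃ G : Filter ℕ, (∅ : Set ℕ) ∉ G ∧
            (∃ S : Set ℕ, G = Filter.principal S) ∧
            {C : Set (ℕ → ℕ) |
              ∃ f ∈ Set.range Ψ, C = {g | {n : ℕ | f n = g n} ∈ G}}.Finite) ∨
        (∃ F : Filter ℕ, (∅ : Set ℕ) ∉ F ∧
            (¬ ∃ S : Set ℕ, F = Filter.principal S) ∧
            ∃ g : ℕ → ℕ, ∀ f ∈ Set.range Ψ, {n : ℕ | f n < g n} ∈ F) := by
  classical
  set U : ℕ → ℕ → Set α := fun n m => {x | Ψ x n ≤ m} with hUdef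
  have hUopen : ∀ n m, IsOpen (U n m) := fun n m =>
    (isOpen_discrete (Set.Iic m)).preimage ((continuous_apply n).comp hΨ)
  obtain ⟨ℱ, hℱ, hD⟩ := hU (fun n => Set.range (U n)) (fun n =>
    ⟨Set.countable_range _,
     fun u hu => by obtain ⟨m, rfl⟩ := hu; exact hUopen n m,
     Set.eq_univ_of_forall fun x => ⟨U n (Ψ x n), ⟨Ψ x n, rfl⟩, by simp [hUdef]⟩⟩)
  set idx : ℕ → Set α → ℕ := fun n s => if h : ∃ m, U n m = s then Nat.find h else 0 with hidxdef
  have hidx : ∀ n, ∀ s ∈ ℱ n, U n (idx n s) = s := by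
    intro n s hs
    have h : ∃ m, U n m = s := (hℱ n).2 hs
    simp only [hidxdef, dif_pos h]
    exact Nat.find_spec h
  set g : ℕ → ℕ := fun n => ((hℱ n).1.toFinset).sup (idx n) with hgdef
  have hb : ∀ n, ∀ x, x ∈ ⋃₀ ℱ n → Ψ x n ≤ g n := by
    rintro n x ⟨s, hs, hxs⟩
    rw [← hidx n s hs] at hxs
    exact le_trans hxs (Finset.le_sup ((hℱ n).1.mem_toFinset.mpr hs))
  by_cases hcov : ∃ n, ⋃₀ ℱ n = Set.univ
  · obtain ⟨n₀, h₀⟩ := hcov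
    left
    refine ⟨Filter.principal {n₀}, ?_, ⟨{n₀}, rfl⟩, ?_⟩
    · intro hm
      exact absurd (Filter.mem_principal.mp hm rfl) (Set.notMem_empty n₀)
    · apply Set.Finite.subset ((Set.finite_Iic (g n₀)).image (fun v => {g' : ℕ → ℕ | v = g' n₀}))
      rintro C ⟨f, ⟨x, rfl⟩, rfl⟩
      refine ⟨Ψ x n₀, hb n₀ x (by rw [h₀]; trivial), ?_⟩
      ext g'
      simp only [Set.mem_setOf_eq, Filter.mem_principal, Set.singleton_subset_iff]
  · right
    have hΩ := hD.resolve_left hcov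
    push_neg at hcov
    have hy : ∀ n, ∃ z : α, z ∉ ⋃₀ ℱ n := fun n =>
      (Set.ne_univ_iff_exists_notMem _).mp (hcov n)
    choose y hy using hy
    have key : ∀ A : Set α, A.Finite → {n | ∀ x ∈ A, x ∈ ⋃₀ ℱ n}.Infinite := by
      intro A hA
      by_contra hfin
      rw [Set.not_infinite] at hfin
      obtain ⟨V, hV, hAV⟩ := hΩ.2 (A ∪ y '' {n | ∀ x ∈ A, x ∈ ⋃₀ ℱ n}) (hA.union (hfin.image y))
      obtain ⟨m, rfl⟩ := hV
      have hm : m ∈ {n | ∀ x ∈ A, x ∈ ⋃₀ ℱ n} := fun x hx => hAV (Or.inl hx)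
      exact hy m (hAV (Or.inr ⟨m, hm, rfl⟩))
    set Gen : Set (Set ℕ) :=
      {B | ∃ x : α, B = {n | Ψ x n ≤ g n}} ∪ {B | ∃ N, B = Set.Ici N} with hGen
    have key2' : ∀ t : Set (Set ℕ), t.Finite → t ⊆ Gen →
        ∃ A : Set α, A.Finite ∧ ∃ N : ℕ,
          ∀ n ∈ {n | ∀ x ∈ A, x ∈ ⋃₀ ℱ n}, (N ≤ n) → n ∈ ⋂₀ t := by
      intro t htf
      refine Set.Finite.induction_on (motive := fun t _ => t ⊆ Gen →
          ∃ A : Set α, A.Finite ∧ ∃ N : ℕ,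
            ∀ n ∈ {n | ∀ x ∈ A, x ∈ ⋃₀ ℱ n}, (N ≤ n) → n ∈ ⋂₀ t) t htf (fun _ => ⟨∅, Set.finite_empty, 0, fun n _ _ => by simp⟩) ?_
      rintro B t hBt htf ih hins
      have hBG := hins (Set.mem_insert _ _)
      obtain ⟨A, hA, N, hAN⟩ := ih (fun u hu => hins (Set.mem_insert_of_mem _ hu))
      rcases hBG with ⟨x, rfl⟩ | ⟨M, rfl⟩
      · refine ⟨insert x A, hA.insert x, N, fun n hn hNn => ?_⟩
        rw [Set.sInter_insert]
        exact ⟨hb n x (hn x (Set.mem_insert _ _)),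
          hAN n (fun z hz => hn z (Set.mem_insert_of_mem _ hz)) hNn⟩
      · refine ⟨A, hA, max N M, fun n hn hNn => ?_⟩
        rw [Set.sInter_insert]
        exact ⟨le_trans (le_max_right N M) hNn, hAN n hn (le_trans (le_max_left N M) hNn)⟩
    have key2 : ∀ t : Set (Set ℕ), t.Finite → t ⊆ Gen → (⋂₀ t).Nonempty := by
      intro t htf htG
      obtain ⟨A, hA, N, hAN⟩ := key2' t htf htG
      obtain ⟨n, hnA, hNn⟩ := (key A hA).exists_gt N
      exact ⟨n, hAN n hnA hNn.le⟩
    have hF0 : (∅ : Set ℕ) ∉ Filter.generate Gen := by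
      intro h0
      rw [Filter.mem_generate_iff] at h0
      obtain ⟨t, htG, htf, hts⟩ := h0
      obtain ⟨n, hn⟩ := key2 t htf htG
      exact Set.notMem_empty n (hts hn)
    refine ⟨Filter.generate Gen, hF0, ?_, fun n => g n + 1, ?_⟩
    · rintro ⟨T, hT⟩
      have h1 : ∀ N : ℕ, T ⊆ Set.Ici N := fun N => Filter.mem_principal.mp
        (hT ▸ Filter.mem_generate_of_mem ((Set.mem_union _ _ _).mpr (Or.inr ⟨N, rfl⟩)))
      have hTe : T = ∅ := Set.eq_empty_iff_forall_notMem.mpr fun m hm => by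
        have := h1 (m + 1) hm
        simp only [Set.mem_Ici] at this
        omega
      apply hF0
      rw [hT, hTe]
      exact Filter.mem_principal_self ∅
    · rintro f ⟨x, rfl⟩
      have he : {n | Ψ x n < g n + 1} = {n | Ψ x n ≤ g n} := by
        ext n; exact Nat.lt_succ_iff
      rw [he]
      exact Filter.mem_generate_of_mem ((Set.mem_union _ _ _).mpr (Or.inl ⟨x, rfl⟩))


private theorem bwd (X : Set ℝ) (hX : ZeroDimensionalSet X)
    (h : ∀ Ψ : ↥X → (ℕ → ℕ), Continuous Ψ →
        (∃ G : Filter ℕ, (∅ : Set ℕ) ∉ G ∧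
            (∃ S : Set ℕ, G = Filter.principal S) ∧
            {C : Set (ℕ → ℕ) |
              ∃ f ∈ Set.range Ψ, C = {g | {n : ℕ | f n = g n} ∈ G}}.Finite) ∨
        (∃ F : Filter ℕ, (∅ : Set ℕ) ∉ F ∧
            (¬ ∃ S : Set ℕ, F = Filter.principal S) ∧
            ∃ g : ℕ → ℕ, ∀ f ∈ Set.range Ψ, {n : ℕ | f n < g n} ∈ F)) :
    UfinOOmega ↥X := by
  classical
  intro 𝒰 h𝒰
  rcases isEmpty_or_nonempty ↥X with he | hne
  · refine ⟨fun _ => ∅, fun n => ⟨Set.finite_empty, Set.empty_subset _⟩, Or.inl ⟨0, ?_⟩⟩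
    rw [Set.sUnion_empty, Set.univ_eq_empty_iff.mpr he]
  obtain ⟨B, hB, hBclopen⟩ := hX
  have hW : ∀ n, ∃ W : ℕ → Set ↥X, (∀ m, IsClopen (W m)) ∧
      (∀ m, ∃ U ∈ 𝒰 n, W m ⊆ U) ∧ (∀ x, ∃ m, x ∈ W m) := by
    intro n
    set C : Set (Set ↥X) := {b | b ∈ B ∧ ∃ U ∈ 𝒰 n, b ⊆ U} with hC
    have hCcov : ⋃₀ C = Set.univ := by
      apply Set.eq_univ_of_forall
      intro x
      have hx : x ∈ ⋃₀ 𝒰 n := by rw [(h𝒰 n).2.2]; trivial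
      obtain ⟨u, hu, hxu⟩ := hx
      obtain ⟨b, hbB, hxb, hbu⟩ := hB.exists_subset_of_mem_open hxu ((h𝒰 n).2.1 u hu)
      exact ⟨b, ⟨hbB, u, hu, hbu⟩, hxb⟩
    obtain ⟨T, hTc, hTsub, hTun⟩ :=
      TopologicalSpace.isOpen_sUnion_countable C (fun s hs => (hBclopen s hs.1).isOpen)
    have hTun' : ⋃₀ T = Set.univ := hTun.trans hCcov
    have hTne : T.Nonempty := by
      rcases T.eq_empty_or_nonempty with h' | h'
      · exfalso
        rw [h', Set.sUnion_empty] at hTun'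
        exact Set.univ_nonempty.ne_empty hTun'.symm
      · exact h'
    obtain ⟨W, hWT⟩ := hTc.exists_eq_range hTne
    refine ⟨W, ?_, ?_, ?_⟩
    · intro m
      exact hBclopen _ (hTsub (hWT ▸ Set.mem_range_self m)).1
    · intro m
      exact (hTsub (hWT ▸ Set.mem_range_self m)).2
    · intro x
      have : x ∈ ⋃₀ T := by rw [hTun']; trivial
      obtain ⟨t, htT, hxt⟩ := this
      rw [hWT] at htT
      obtain ⟨m, rfl⟩ := htT
      exact ⟨m, hxt⟩
  choose W hWclopen hWsel hWcov using hW
  choose Usel hUselmem hUselsub using hWsel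
  set Ψ : ↥X → (ℕ → ℕ) := fun x n => Nat.find (hWcov n x) with hΨdef
  have hΨW : ∀ x n, x ∈ W n (Ψ x n) := fun x n => Nat.find_spec (hWcov n x)
  have hΨc : Continuous Ψ := by
    apply continuous_pi
    intro n
    rw [continuous_discrete_rng]
    intro k
    have he : (fun x => Ψ x n) ⁻¹' {k} = W n k ∩ ⋂ j ∈ Finset.range k, (W n j)ᶜ := by
      ext x
      simp only [Set.mem_preimage, Set.mem_singleton_iff, hΨdef, Nat.find_eq_iff,
        Set.mem_inter_iff, Set.mem_iInter, Finset.mem_range, Set.mem_compl_iff]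
    rw [he]
    exact (hWclopen n k).isOpen.inter
      (isOpen_biInter_finset fun j _ => (hWclopen n j).compl.isOpen)
  rcases h Ψ hΨc with ⟨G, hG0, ⟨S, rfl⟩, hKfin⟩ | ⟨F, hF0, _, g, hg⟩
  · -- principal case: finite subcover at some coordinate
    have hSne : S.Nonempty := by
      rcases S.eq_empty_or_nonempty with h' | h'
      · exact absurd (h' ▸ Filter.mem_principal_self S) hG0
      · exact h'
    obtain ⟨n₀, hn₀S⟩ := hSne
    set val : Set (ℕ → ℕ) → ℕ := fun C => if h' : C.Nonempty then h'.choose n₀ else 0 with hval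
    have hsub2 : (Set.range fun x => Ψ x n₀) ⊆
        val '' {C : Set (ℕ → ℕ) |
          ∃ f ∈ Set.range Ψ, C = {g | {n : ℕ | f n = g n} ∈ Filter.principal S}} := by
      rintro v ⟨x, rfl⟩
      refine ⟨{g' | {n | Ψ x n = g' n} ∈ Filter.principal S}, ⟨Ψ x, ⟨x, rfl⟩, rfl⟩, ?_⟩
      have hCne : ({g' | {n | Ψ x n = g' n} ∈ Filter.principal S} : Set (ℕ → ℕ)).Nonempty :=
        ⟨Ψ x, Filter.mem_principal.mpr fun n _ => rfl⟩
      simp only [hval, dif_pos hCne]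
      exact (Filter.mem_principal.mp hCne.choose_spec hn₀S).symm
    have hvfin : (Set.range fun x => Ψ x n₀).Finite := (hKfin.image val).subset hsub2
    obtain ⟨M, hM⟩ := hvfin.bddAbove
    have hbd : ∀ x : ↥X, Ψ x n₀ ≤ M := fun x => hM (Set.mem_range_self x)
    refine ⟨fun n => Usel n '' Set.Iic M,
      fun n => ⟨(Set.finite_Iic M).image _, ?_⟩, Or.inl ⟨n₀, ?_⟩⟩
    · rintro u ⟨m, _, rfl⟩
      exact hUselmem n m
    · apply Set.eq_univ_of_forall
      intro x
      exact ⟨Usel n₀ (Ψ x n₀), ⟨Ψ x n₀, hbd x, rfl⟩, hUselsub n₀ (Ψ x n₀) (hΨW x n₀)⟩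
  · -- nonprincipal case: ω-cover
    have hsel : ∀ A : Set ↥X, A.Finite → ∃ V ∈ {s | ∃ n, s = ⋃₀ (Usel n '' Set.Iio (g n))}, A ⊆ V := by
      intro A hA
      have hmemF : (⋂ x ∈ A, {n | Ψ x n < g n}) ∈ F :=
        (Filter.biInter_mem hA).mpr fun x _ => hg (Ψ x) ⟨x, rfl⟩
      have hnon : (⋂ x ∈ A, {n | Ψ x n < g n}).Nonempty := by
        rcases Set.eq_empty_or_nonempty (⋂ x ∈ A, {n | Ψ x n < g n}) with h' | h'
        · rw [h'] at hmemF
          exact absurd hmemF hF0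
        · exact h'
      obtain ⟨n, hn⟩ := hnon
      simp only [Set.mem_iInter, Set.mem_setOf_eq] at hn
      refine ⟨⋃₀ (Usel n '' Set.Iio (g n)), ⟨n, rfl⟩, fun x hx => ?_⟩
      exact ⟨Usel n (Ψ x n), ⟨Ψ x n, hn x hx, rfl⟩, hUselsub n (Ψ x n) (hΨW x n)⟩
    refine ⟨fun n => Usel n '' Set.Iio (g n),
      fun n => ⟨(Set.finite_Iio _).image _, ?_⟩, Or.inr ⟨?_, hsel⟩⟩
    · rintro u ⟨m, _, rfl⟩
      exact hUselmem n m
    · apply Set.eq_univ_of_forall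
      intro x
      obtain ⟨V, hV, hxV⟩ := hsel {x} (Set.finite_singleton x)
      exact ⟨V, hV, hxV rfl⟩


/-- A zero-dimensional set of reals satisfies `Ufin(O,Ω)` iff for each
continuous `Ψ : X → ℕ^ℕ`, either there is a principal (proper) filter `G`
on `ℕ` for which the reduced product image `Ψ[X]/G` is finite, or there is
a non-principal (proper) filter `F` on `ℕ` such that `Ψ[X]/F` is bounded
in `ℕ^ℕ/F`. -/
theorem ufinOOmega_iff_reduced_product (X : Set ℝ)
    (hX : ZeroDimensionalSet X) :
    UfinOOmega ↥X ↔
      ∀ Ψ : ↥X → (ℕ → ℕ), Continuous Ψ →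
        (∃ G : Filter ℕ, (∅ : Set ℕ) ∉ G ∧
            (∃ S : Set ℕ, G = Filter.principal S) ∧
            {C : Set (ℕ → ℕ) |
              ∃ f ∈ Set.range Ψ, C = {g | {n : ℕ | f n = g n} ∈ G}}.Finite) ∨
        (∃ F : Filter ℕ, (∅ : Set ℕ) ∉ F ∧
            (¬ ∃ S : Set ℕ, F = Filter.principal S) ∧
            ∃ g : ℕ → ℕ, ∀ f ∈ Set.range Ψ, {n : ℕ | f n < g n} ∈ F) :=
  ⟨fun hU Ψ hΨ => fwd hU Ψ hΨ, fun h => bwd X hX h⟩
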